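/- Let G be a graph, v an avoidable vertex of G that is not contained in any moplex, and M ⊆ V(G)∖{v}. Then M is a moplex of G if and only if M is a moplex of G−v. -/

import Mathlib

open SimpleGraph

namespace MoplexPaper

variable {V : Type*}

/-- Reachability in `G - S`: a walk from `u` to `v` all of whose vertices avoid `S`. -/
def ReachOutside (G : SimpleGraph V) (S : Set V) (u v : V) : Prop :=
  ∃ p : G.Walk u v, ∀ x ∈ p.support, x ∉ S

/-- `S` is a `u,v`-separator. -/
def IsSeparator (G : SimpleGraph V) (u v : V) (S : Set V) : Prop :=
  ¬ G.Adj u v ∧ u ∉ S ∧ v ∉ S ∧ ¬ ReachOutside G S u v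

/-- `S` is a minimal `u,v`-separator. -/
def IsMinSeparator (G : SimpleGraph V) (u v : V) (S : Set V) : Prop :=
  IsSeparator G u v S ∧ ∀ T ⊂ S, ¬ IsSeparator G u v T

/-- `S` is a minimal separator of `G`. -/
def IsMinimalSeparator (G : SimpleGraph V) (S : Set V) : Prop :=
  ∃ u v, u ≠ v ∧ IsMinSeparator G u v S

/-- The (open) neighbourhood of a set of vertices. -/
def setNbhd (G : SimpleGraph V) (X : Set V) : Set V :=
  {v | v ∉ X ∧ ∃ x ∈ X, G.Adj v x}

/-- The closed neighbourhood of a vertex. -/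
def closedNbhd (G : SimpleGraph V) (v : V) : Set V :=
  insert v (G.neighborSet v)

/-- `M` is a module of `G`. -/
def IsModule (G : SimpleGraph V) (M : Set V) : Prop :=
  ∀ v ∉ M, (∀ x ∈ M, G.Adj v x) ∨ (∀ x ∈ M, ¬ G.Adj v x)

/-- `M` is a clique module of `G`. -/
def IsCliqueModule (G : SimpleGraph V) (M : Set V) : Prop :=
  G.IsClique M ∧ IsModule G M

/-- `X` is a moplex of `G`: an inclusion-maximal clique module whose
neighbourhood is empty or a minimal separator. -/
def IsMoplex (G : SimpleGraph V) (X : Set V) : Prop :=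
  X.Nonempty ∧ IsCliqueModule G X ∧
  (∀ Y, X ⊆ Y → IsCliqueModule G Y → Y = X) ∧
  (setNbhd G X = ∅ ∨ IsMinimalSeparator G (setNbhd G X))

/-- A vertex is moplicial if it belongs to a moplex. -/
def Moplicial (G : SimpleGraph V) (v : V) : Prop := ∃ X, IsMoplex G X ∧ v ∈ X

/-- An extension of `v`: an induced `P₃` with midpoint `v`. -/
def IsExtension (G : SimpleGraph V) (v a b : V) : Prop :=
  a ≠ b ∧ G.Adj v a ∧ G.Adj v b ∧ ¬ G.Adj a b

/-- A cycle is induced if the only edges of `G` among its vertices are its own edges. -/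
def IsInducedCycle (G : SimpleGraph V) {w : V} (c : G.Walk w w) : Prop :=
  c.IsCycle ∧ ∀ x ∈ c.support, ∀ y ∈ c.support, G.Adj x y → s(x, y) ∈ c.edges

/-- `v` is avoidable: every extension of `v` is contained in an induced cycle. -/
def Avoidable (G : SimpleGraph V) (v : V) : Prop :=
  ∀ a b, IsExtension G v a b →
    ∃ (w : V) (c : G.Walk w w), IsInducedCycle G c ∧
      a ∈ c.support ∧ v ∈ c.support ∧ b ∈ c.support

/-- `A` is an asteroidal set of `G`. -/
def IsAsteroidal (G : SimpleGraph V) (A : Set V) : Prop :=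
  ∀ a ∈ A, ∀ x ∈ A, ∀ y ∈ A, x ≠ a → y ≠ a →
    ReachOutside G (closedNbhd G a) x y

/-- `G` is AT-free: it has no asteroidal triple. -/
def ATFree (G : SimpleGraph V) : Prop :=
  ¬ ∃ A : Set V, IsAsteroidal G A ∧ A.ncard = 3

/-- `G` has exactly the two moplexes `U` and `W`. -/
def HasExactlyTwoMoplexes (G : SimpleGraph V) (U W : Set V) : Prop :=
  IsMoplex G U ∧ IsMoplex G W ∧ U ≠ W ∧ ∀ X, IsMoplex G X → X = U ∨ X = W

/-- `G` is not complete. -/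
def NonComplete (G : SimpleGraph V) : Prop :=
  ∃ x y : V, x ≠ y ∧ ¬ G.Adj x y

/-! ### Basic lemmas about `ReachOutside` -/

variable {G : SimpleGraph V}

lemma reach_refl {S : Set V} {x : V} (hx : x ∉ S) : ReachOutside G S x x :=
  ⟨Walk.nil, by simpa using hx⟩

lemma reach_left {S : Set V} {x y : V} (h : ReachOutside G S x y) : x ∉ S := by
  obtain ⟨p, hp⟩ := h
  exact hp x p.start_mem_support

lemma reach_right {S : Set V} {x y : V} (h : ReachOutside G S x y) : y ∉ S := by
  obtain ⟨p, hp⟩ := h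
  exact hp y p.end_mem_support

lemma reach_symm {S : Set V} {x y : V} (h : ReachOutside G S x y) : ReachOutside G S y x := by
  obtain ⟨p, hp⟩ := h
  exact ⟨p.reverse, fun u hu => hp u (by simpa [Walk.support_reverse] using hu)⟩

lemma reach_trans {S : Set V} {x y z : V} (h1 : ReachOutside G S x y)
    (h2 : ReachOutside G S y z) : ReachOutside G S x z := by
  obtain ⟨p, hp⟩ := h1
  obtain ⟨q, hq⟩ := h2
  refine ⟨p.append q, fun u hu => ?_⟩
  rcases (Walk.mem_support_append_iff p q).1 hu with h | h
  · exact hp u h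
  · exact hq u h

lemma reach_adj {S : Set V} {x y : V} (h : G.Adj x y) (hx : x ∉ S) (hy : y ∉ S) :
    ReachOutside G S x y :=
  ⟨Walk.cons h Walk.nil, by intro u hu; simp at hu; rcases hu with rfl | rfl <;> assumption⟩

lemma reach_mono {S T : Set V} (hTS : T ⊆ S) {x y : V} (h : ReachOutside G S x y) :
    ReachOutside G T x y := by
  obtain ⟨p, hp⟩ := h
  exact ⟨p, fun u hu hT => hp u hu (hTS hT)⟩

lemma walk_reach {S : Set V} {x y : V} (p : G.Walk x y) (hp : ∀ u ∈ p.support, u ∉ S) :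
    ∀ u ∈ p.support, ReachOutside G S x u := by
  induction p with
  | nil =>
    intro u hu
    simp only [Walk.support_nil, List.mem_singleton] at hu
    subst hu
    exact reach_refl (hp _ (by simp))
  | @cons a b c h q ih =>
    intro u hu
    have ha : a ∉ S := hp a (by simp)
    have hb : b ∉ S := hp b (by simp)
    rcases (by simpa using hu : u = a ∨ u ∈ q.support) with rfl | hu'
    · exact reach_refl ha
    · exact reach_trans (reach_adj h ha hb)
        (ih (fun z hz => hp z (by simp [hz])) u hu')

/-- Along a walk from `x` avoiding nothing, either we can reach the end avoiding `S`, or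
we first hit `S` at some vertex `s` with a predecessor reachable from `x` avoiding `S`. -/
lemma walk_split {S : Set V} {x y : V} (p : G.Walk x y) :
    x ∉ S → (ReachOutside G S x y ∨
      ∃ s ∈ S, s ∈ p.support ∧ ∃ z, ReachOutside G S x z ∧ G.Adj z s) := by
  induction p with
  | nil => intro hx; exact Or.inl (reach_refl hx)
  | @cons a b c h q ih =>
    intro hx
    by_cases hb : b ∈ S
    · exact Or.inr ⟨b, hb, by simp, a, reach_refl hx, h⟩
    · rcases ih hb with hr | ⟨s, hs, hsup, z, hz, hzs⟩
      · exact Or.inl (reach_trans (reach_adj h hx hb) hr)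
      · exact Or.inr ⟨s, hs, by simp [hsup], z, reach_trans (reach_adj h hx hb) hz, hzs⟩

/-- If `A` is "closed" (neighbours of `A`-vertices outside `S` lie in `A ∪ S`), then
reachability avoiding `S` stays in `A`. -/
lemma reach_stays {A S : Set V} (hcl : ∀ x ∈ A, x ∉ S → ∀ y, G.Adj x y → y ∈ A ∪ S)
    {a u : V} (ha : a ∈ A) (h : ReachOutside G S a u) : u ∈ A := by
  obtain ⟨p, hp⟩ := h
  induction p with
  | nil => exact ha
  | @cons a b c h q ih =>
    have hb : b ∈ A := by
      rcases hcl a ha (hp a (by simp)) b h with hbA | hbS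
      · exact hbA
      · exact absurd hbS (hp b (by simp))
    exact ih hb (fun z hz => hp z (by simp [hz]))

/-! ### Modules and clique modules -/

lemma module_adj_all {M : Set V} (hM : IsModule G M) {u : V} (hu : u ∉ M) {x : V}
    (hx : x ∈ M) (h : G.Adj u x) : ∀ y ∈ M, G.Adj u y := by
  rcases hM u hu with h1 | h2
  · exact h1
  · exact absurd h (h2 x hx)

lemma mem_setNbhd_iff {M : Set V} {u : V} :
    u ∈ setNbhd G M ↔ u ∉ M ∧ ∃ x ∈ M, G.Adj u x := Iff.rfl

lemma setNbhd_adj_all {M : Set V} (hM : IsModule G M) {u : V} (hu : u ∈ setNbhd G M) :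
    ∀ y ∈ M, G.Adj u y := by
  obtain ⟨hu1, x, hx, hux⟩ := hu
  exact module_adj_all hM hu1 hx hux

lemma reach_stays_in_module {M : Set V} {m u : V} (hm : m ∈ M)
    (h : ReachOutside G (setNbhd G M) m u) : u ∈ M := by
  refine reach_stays ?_ hm h
  intro x hx _ y hxy
  by_cases hyM : y ∈ M
  · exact Or.inl hyM
  · exact Or.inr ⟨hyM, x, hx, hxy.symm⟩

lemma reach_stays_out_module {M S : Set V} (hS : setNbhd G M ⊆ S) {a u : V}
    (ha : a ∉ M) (h : ReachOutside G S a u) : u ∉ M := by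
  have : u ∈ {z | z ∉ M} := by
    refine reach_stays ?_ ha h
    intro x hx hxS y hxy
    by_cases hyM : y ∈ M
    · exact absurd (hS ⟨hx, y, hyM, hxy⟩) hxS
    · exact Or.inl hyM
  exact this

lemma cm_union {A B : Set V} {v : V} (hA : IsCliqueModule G A) (hB : IsCliqueModule G B)
    (hvA : v ∈ A) (hvB : v ∈ B) : IsCliqueModule G (A ∪ B) := by
  have key : ∀ x ∈ A, ∀ y ∈ B, x ≠ y → G.Adj x y := by
    intro x hx y hy hxy
    by_cases hxB : x ∈ B
    · exact hB.1 hxB hy hxy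
    · have hxv : G.Adj x v := by
        rcases eq_or_ne x v with rfl | hne
        · exact absurd hvB hxB
        · exact hA.1 hx hvA hne
      exact module_adj_all hB.2 hxB hvB hxv y hy
  constructor
  · intro x hx y hy hxy
    rcases hx with hxA | hxB <;> rcases hy with hyA | hyB
    · exact hA.1 hxA hyA hxy
    · exact key x hxA y hyB hxy
    · exact (key y hyA x hxB hxy.symm).symm
    · exact hB.1 hxB hyB hxy
  · intro z hz
    have hzA : z ∉ A := fun h => hz (Or.inl h)
    have hzB : z ∉ B := fun h => hz (Or.inr h)
    rcases hA.2 z hzA with hA1 | hA0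
    · left
      intro x hx
      rcases hx with hxA | hxB
      · exact hA1 x hxA
      · exact module_adj_all hB.2 hzB hvB (hA1 v hvA) x hxB
    · right
      intro x hx hadj
      rcases hx with hxA | hxB
      · exact hA0 x hxA hadj
      · rcases hB.2 z hzB with hB1 | hB0
        · exact hA0 v hvA (hB1 v hvB)
        · exact hB0 x hxB hadj

/-- The union of all clique modules containing `v`: the unique maximal clique module
containing `v`. -/
def maxCM (G : SimpleGraph V) (v : V) : Set V := ⋃₀ {A | IsCliqueModule G A ∧ v ∈ A}

lemma singleton_cm (G : SimpleGraph V) (v : V) : IsCliqueModule G {v} := by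
  constructor
  · intro x hx y hy hxy
    simp at hx hy
    subst hx; subst hy; exact absurd rfl hxy
  · intro u hu
    by_cases h : G.Adj u v
    · left; intro x hx; simp at hx; subst hx; exact h
    · right; intro x hx; simp at hx; subst hx; exact h

lemma mem_maxCM (G : SimpleGraph V) (v : V) : v ∈ maxCM G v :=
  ⟨{v}, ⟨singleton_cm G v, rfl⟩, rfl⟩

lemma maxCM_cm (G : SimpleGraph V) (v : V) : IsCliqueModule G (maxCM G v) := by
  constructor
  · intro x hx y hy hxy
    obtain ⟨A, ⟨hA, hvA⟩, hxA⟩ := hx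
    obtain ⟨B, ⟨hB, hvB⟩, hyB⟩ := hy
    exact (cm_union hA hB hvA hvB).1 (Or.inl hxA) (Or.inr hyB) hxy
  · intro z hz
    by_cases hzv : G.Adj z v
    · left
      rintro x ⟨A, ⟨hA, hvA⟩, hxA⟩
      have hzA : z ∉ A := fun h => hz ⟨A, ⟨hA, hvA⟩, h⟩
      exact module_adj_all hA.2 hzA hvA hzv x hxA
    · right
      rintro x ⟨A, ⟨hA, hvA⟩, hxA⟩ hadj
      have hzA : z ∉ A := fun h => hz ⟨A, ⟨hA, hvA⟩, h⟩
      rcases hA.2 z hzA with h1 | h0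
      · exact hzv (h1 v hvA)
      · exact h0 x hxA hadj

lemma maxCM_max (G : SimpleGraph V) (v : V) :
    ∀ Y, maxCM G v ⊆ Y → IsCliqueModule G Y → Y = maxCM G v := by
  intro Y hsub hY
  refine Set.Subset.antisymm ?_ hsub
  exact Set.subset_sUnion_of_mem ⟨hY, hsub (mem_maxCM G v)⟩

/-! ### Building moplexes and minimal separators -/

/-- A maximal clique module `X` with a vertex `b` outside `X ∪ N(X)` whose
component (in `G - N(X)`) sees all of `N(X)` is a moplex. -/
lemma moplex_of_full {X : Set V} {b : V} (hX : IsCliqueModule G X)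
    (hmax : ∀ Y, X ⊆ Y → IsCliqueModule G Y → Y = X) (hne : X.Nonempty)
    (hbX : b ∉ X) (hbW : b ∉ setNbhd G X)
    (hfull : ∀ w ∈ setNbhd G X, ∃ y, ReachOutside G (setNbhd G X) b y ∧ G.Adj w y) :
    IsMoplex G X := by
  refine ⟨hne, hX, hmax, ?_⟩
  by_cases hW : setNbhd G X = ∅
  · exact Or.inl hW
  · right
    obtain ⟨x₀, hx₀⟩ := hne
    have hx₀W : x₀ ∉ setNbhd G X := fun h => h.1 hx₀
    have hadj : ¬ G.Adj x₀ b := fun h => hbW ⟨hbX, x₀, hx₀, h.symm⟩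
    have hxb : x₀ ≠ b := fun h => hbX (h ▸ hx₀)
    refine ⟨x₀, b, hxb, ⟨⟨hadj, hx₀W, hbW, ?_⟩, ?_⟩⟩
    · intro hr
      exact hbX (reach_stays_in_module hx₀ hr)
    · rintro T hT ⟨hT1, hT2, hT3, hT4⟩
      obtain ⟨s, hsW, hsT⟩ := Set.exists_of_ssubset hT
      obtain ⟨y, hy, hwy⟩ := hfull s hsW
      apply hT4
      have hx₀T : x₀ ∉ T := fun h => hx₀W (hT.1 h)
      have hyW : y ∉ setNbhd G X := reach_right hy
      have hyT : y ∉ T := fun h => hyW (hT.1 h)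
      have h1 : ReachOutside G T x₀ s :=
        reach_adj (setNbhd_adj_all hX.2 hsW x₀ hx₀).symm hx₀T hsT
      have h2 : ReachOutside G T s y := reach_adj hwy hsT hyT
      have h3 : ReachOutside G T y b := reach_mono hT.1 (reach_symm hy)
      exact reach_trans (reach_trans h1 h2) h3

lemma sep_symm {S : Set V} {p q : V} (h : IsSeparator G p q S) : IsSeparator G q p S :=
  ⟨fun ha => h.1 ha.symm, h.2.2.1, h.2.1, fun hr => h.2.2.2 (reach_symm hr)⟩

lemma minsep_symm {S : Set V} {p q : V} (h : IsMinSeparator G p q S) :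
    IsMinSeparator G q p S :=
  ⟨sep_symm h.1, fun T hT hs => h.2 T hT (sep_symm hs)⟩

/-- In a minimal `p,q`-separator, every vertex of `S` has a neighbour in the
component of `p`. -/
lemma minsep_full {S : Set V} {p q : V} (h : IsMinSeparator G p q S) :
    ∀ s ∈ S, ∃ x, ReachOutside G S p x ∧ G.Adj x s := by
  intro s hs
  have hdiff : S \ {s} ⊂ S := by
    constructor
    · exact Set.diff_subset
    · intro hsub
      exact (hsub hs).2 rfl
  have hns := h.2 _ hdiff
  have hR : ReachOutside G (S \ {s}) p q := by
    by_contra hR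
    exact hns ⟨h.1.1, fun hp => h.1.2.1 hp.1, fun hq => h.1.2.2.1 hq.1, hR⟩
  obtain ⟨w, hw⟩ := hR
  rcases walk_split (S := S) w h.1.2.1 with hr | ⟨s', hs', hsup, z, hz, hzs⟩
  · exact absurd hr h.1.2.2.2
  · have hss : s' = s := by
      by_contra hne
      exact hw s' hsup ⟨hs', hne⟩
    exact ⟨z, hz, hss ▸ hzs⟩


/-! ### The deleted graph `G - v` -/

section Delete

variable {G : SimpleGraph V} {v : V}

/-- Deleted-graph module condition expressed in `V`. -/
def ModuleDel (G : SimpleGraph V) (v : V) (M : Set V) : Prop :=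
  ∀ u ∉ M, u ≠ v → (∀ x ∈ M, G.Adj u x) ∨ (∀ x ∈ M, ¬ G.Adj u x)

/-- Deleted-graph separator condition expressed in `V`. -/
def SepDel (G : SimpleGraph V) (v : V) (p q : V) (S : Set V) : Prop :=
  ¬ G.Adj p q ∧ p ∉ S ∧ q ∉ S ∧ ¬ ReachOutside G (insert v S) p q

/-- Deleted-graph minimal separator condition expressed in `V`. -/
def MinsepDel (G : SimpleGraph V) (v : V) (S : Set V) : Prop :=
  ∃ p q : V, p ≠ v ∧ q ≠ v ∧ p ≠ q ∧ SepDel G v p q S ∧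
    ∀ T, T ⊆ S → T ≠ S → ¬ SepDel G v p q T

/-- Hom from `G - v` to `G`. -/
def downHom (G : SimpleGraph V) (v : V) :
    (G.comap (Subtype.val : {x : V // x ≠ v} → V)) →g G :=
  ⟨Subtype.val, fun h => h⟩

lemma reach_down {S₀ : Set V} {x y : {x : V // x ≠ v}}
    (h : ReachOutside (G.comap (Subtype.val : {x : V // x ≠ v} → V))
      {z : {x : V // x ≠ v} | (z : V) ∈ S₀} x y) :
    ReachOutside G (insert v S₀) (x : V) (y : V) := by
  obtain ⟨p, hp⟩ := h
  refine ⟨p.map (downHom G v), ?_⟩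
  intro u hu
  erw [Walk.support_map] at hu
  obtain ⟨u', hu', rfl⟩ := List.mem_map.mp hu
  intro hmem
  rcases Set.mem_insert_iff.mp hmem with h | hS
  · exact u'.2 h
  · exact hp u' hu' hS

lemma walk_up {a b : V} (p : G.Walk a b) (hp : ∀ u ∈ p.support, u ≠ v) :
    ∀ (ha : a ≠ v) (hb : b ≠ v),
      ∃ q : (G.comap (Subtype.val : {x : V // x ≠ v} → V)).Walk ⟨a, ha⟩ ⟨b, hb⟩,
        ∀ x, x ∈ q.support → (x : V) ∈ p.support := by
  induction p with
  | nil =>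
    intro ha _
    exact ⟨Walk.nil, by intro x hx; simp at hx; simp [hx]⟩
  | @cons a b c h q ih =>
    intro ha hb
    have hbv : b ≠ v := hp b (by simp)
    obtain ⟨q', hq'⟩ := ih (fun z hz => hp z (by simp [hz])) hbv hb
    refine ⟨Walk.cons (by exact h) q', ?_⟩
    intro x hx
    rcases (List.mem_cons.mp hx : x = ⟨a, ha⟩ ∨ x ∈ q'.support) with rfl | hx'
    · simp
    · simp [hq' x hx']

lemma reach_up {S₀ : Set V} {a b : V} (ha : a ≠ v) (hb : b ≠ v)
    (h : ReachOutside G (insert v S₀) a b) :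
    ReachOutside (G.comap (Subtype.val : {x : V // x ≠ v} → V))
      {z : {x : V // x ≠ v} | (z : V) ∈ S₀} ⟨a, ha⟩ ⟨b, hb⟩ := by
  obtain ⟨p, hp⟩ := h
  have hnv : ∀ u ∈ p.support, u ≠ v := fun u hu hh =>
    hp u hu (hh ▸ Set.mem_insert v S₀)
  obtain ⟨q, hq⟩ := walk_up p hnv ha hb
  exact ⟨q, fun x hx hS => hp _ (hq x hx) (Set.mem_insert_of_mem _ hS)⟩

lemma reach_del_iff {S₀ : Set V} {x y : {x : V // x ≠ v}} :
    ReachOutside (G.comap (Subtype.val : {x : V // x ≠ v} → V))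
      {z : {x : V // x ≠ v} | (z : V) ∈ S₀} x y ↔
    ReachOutside G (insert v S₀) (x : V) (y : V) := by
  constructor
  · exact reach_down
  · intro h
    have := reach_up x.2 y.2 h
    convert this

/-- The "bypass" lemma: if all neighbours of `v` outside `T` lie in a clique `Mc`,
then reachability avoiding `T` implies reachability avoiding `T ∪ {v}`,
for endpoints other than `v`. -/
lemma bypass {T Mc : Set V} (hclq : G.IsClique Mc)
    (hNv : ∀ z, G.Adj v z → z ∉ T → z ∈ Mc) {x y : V} (hxv : x ≠ v) (hyv : y ≠ v)
    (h : ReachOutside G T x y) : ReachOutside G (insert v T) x y := by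
  obtain ⟨p, hp⟩ := h
  have key : ∀ n (x : V) (p : G.Walk x y), p.length = n → (∀ u ∈ p.support, u ∉ T) →
      x ≠ v → ReachOutside G (insert v T) x y := by
    intro n
    induction n using Nat.strong_induction_on with
    | _ n ih =>
      intro a p hn hp hav
      cases p with
      | nil =>
        refine reach_refl fun hmem => ?_
        rcases Set.mem_insert_iff.mp hmem with h | h
        · exact hav h
        · exact hp _ (by simp) h
      | @cons a b c h q =>
        have haT : a ∉ T := hp a (by simp)
        have hq : ∀ u ∈ q.support, u ∉ T := fun u hu => hp u (by simp [hu])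
        by_cases hbv : b = v
        · cases q with
          | nil =>
            exact absurd (hbv ▸ rfl : y = v) hyv
          | @cons v' b' c' h' q' =>
            have hvb' : G.Adj v b' := hbv ▸ h'
            have hva : G.Adj v a := hbv ▸ h.symm
            have hb'T : b' ∉ T := hq b' (by simp)
            have haM : a ∈ Mc := hNv a hva haT
            have hb'M : b' ∈ Mc := hNv b' hvb' hb'T
            have hq' : ∀ u ∈ q'.support, u ∉ T := fun u hu => hq u (by simp [hu])
            have hb'v : b' ≠ v := hvb'.ne'
            have hlt : q'.length < n := by
              simp only [Walk.length_cons] at hn; omega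
            rcases eq_or_ne a b' with rfl | hab'
            · exact ih q'.length hlt a q' rfl hq' hav
            · exact reach_trans
                (reach_adj (hclq haM hb'M hab') (by simp [Set.mem_insert_iff, hav, haT])
                  (by simp [Set.mem_insert_iff, hb'v, hb'T]))
                (ih q'.length hlt b' q' rfl hq' hb'v)
        · have hlt : q.length < n := by
            simp only [Walk.length_cons] at hn; omega
          exact reach_trans
            (reach_adj h (by simp [Set.mem_insert_iff, hav, haT])
              (by simp [Set.mem_insert_iff, hbv, hq b (by simp)]))
            (ih q.length hlt b q rfl hq hbv)
  exact key p.length x p rfl hp hxv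

end Delete


/-! ### Bridging subtype-world and `V`-world statements -/

/-- The deleted graph `G - v` as a graph on the subtype. -/
abbrev Gdel (G : SimpleGraph V) (v : V) : SimpleGraph {x : V // x ≠ v} :=
  G.comap (Subtype.val : {x : V // x ≠ v} → V)

section Bridge

variable {G : SimpleGraph V} {v : V}



lemma preim_im {Y' : Set {x : V // x ≠ v}} :
    {x : {x : V // x ≠ v} | (x : V) ∈ Subtype.val '' Y'} = Y' := by
  ext x
  simp [Subtype.val_injective.mem_set_image]

lemma im_preim {S₀ : Set V} (hS : v ∉ S₀) :
    Subtype.val '' {x : {x : V // x ≠ v} | (x : V) ∈ S₀} = S₀ := by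
  ext u
  simp only [Set.mem_image, Set.mem_setOf_eq]
  constructor
  · rintro ⟨x, hx, rfl⟩; exact hx
  · intro hu; exact ⟨⟨u, fun h => hS (h ▸ hu)⟩, hu, rfl⟩

lemma clique_del_iff {A : Set V} (hA : v ∉ A) :
    (Gdel G v).IsClique {x : {x : V // x ≠ v} | (x : V) ∈ A} ↔ G.IsClique A := by
  constructor
  · intro h m₁ h₁ m₂ h₂ hne
    have e₁ : m₁ ≠ v := fun hh => hA (hh ▸ h₁)
    have e₂ : m₂ ≠ v := fun hh => hA (hh ▸ h₂)
    exact h (show (⟨m₁, e₁⟩ : {x : V // x ≠ v}) ∈ _ from h₁)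
      (show (⟨m₂, e₂⟩ : {x : V // x ≠ v}) ∈ _ from h₂)
      (fun hh => hne (congrArg Subtype.val hh))
  · intro h x hx y hy hne
    exact h hx hy (fun hh => hne (Subtype.ext hh))

lemma module_del_iff {A : Set V} (hA : v ∉ A) :
    IsModule (Gdel G v) {x : {x : V // x ≠ v} | (x : V) ∈ A} ↔ ModuleDel G v A := by
  constructor
  · intro h u hu huv
    rcases h ⟨u, huv⟩ hu with h1 | h0
    · left; intro x hx
      exact h1 ⟨x, fun hh => hA (hh ▸ hx)⟩ hx
    · right; intro x hx
      exact h0 ⟨x, fun hh => hA (hh ▸ hx)⟩ hx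
  · intro h u' hu'
    rcases h (u' : V) hu' u'.2 with h1 | h0
    · left; intro x hx; exact h1 (x : V) hx
    · right; intro x hx; exact h0 (x : V) hx

lemma setNbhd_del {A : Set V} (hA : v ∉ A) :
    setNbhd (Gdel G v) {x : {x : V // x ≠ v} | (x : V) ∈ A} =
      {x : {x : V // x ≠ v} | (x : V) ∈ setNbhd G A} := by
  ext u
  constructor
  · rintro ⟨h1, y, hy, hadj⟩
    exact ⟨h1, (y : V), hy, hadj⟩
  · rintro ⟨h1, y, hy, hadj⟩
    exact ⟨h1, ⟨y, fun hh => hA (hh ▸ hy)⟩, hy, hadj⟩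

lemma max_del_iff {A : Set V} (hA : v ∉ A) :
    (∀ Y', {x : {x : V // x ≠ v} | (x : V) ∈ A} ⊆ Y' → IsCliqueModule (Gdel G v) Y' →
        Y' = {x : {x : V // x ≠ v} | (x : V) ∈ A}) ↔
    (∀ Y : Set V, v ∉ Y → A ⊆ Y → G.IsClique Y → ModuleDel G v Y → Y = A) := by
  constructor
  · intro h Y hvY hAY hclq hmod
    have hY := h {x : {x : V // x ≠ v} | (x : V) ∈ Y} (fun x hx => hAY hx)
      ⟨(clique_del_iff hvY).2 hclq, (module_del_iff hvY).2 hmod⟩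
    ext u
    constructor
    · intro hu
      have huv : u ≠ v := fun hh => hvY (hh ▸ hu)
      have h2 : (⟨u, huv⟩ : {x : V // x ≠ v}) ∈ {x : {x : V // x ≠ v} | (x : V) ∈ Y} := hu
      rw [hY] at h2
      exact h2
    · exact fun hu => hAY hu
  · intro h Y' hsub hcm
    have hY : v ∉ Subtype.val '' Y' := by rintro ⟨x, _, hx⟩; exact x.2 hx
    have h1 : A ⊆ Subtype.val '' Y' := fun a ha =>
      ⟨⟨a, fun hh => hA (hh ▸ ha)⟩, hsub ha, rfl⟩
    have hc : G.IsClique (Subtype.val '' Y') :=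
      (clique_del_iff hY).1 (by rw [preim_im]; exact hcm.1)
    have hm : ModuleDel G v (Subtype.val '' Y') :=
      (module_del_iff hY).1 (by rw [preim_im]; exact hcm.2)
    have := h _ hY h1 hc hm
    ext x
    constructor
    · intro hx
      have : (x : V) ∈ Subtype.val '' Y' := ⟨x, hx, rfl⟩
      rw [‹Subtype.val '' Y' = A›] at this
      exact this
    · intro hx
      have h2 : (x : V) ∈ Subtype.val '' Y' := ‹Subtype.val '' Y' = A› ▸ hx
      exact Subtype.val_injective.mem_set_image.mp h2

lemma reach_del_iff' {T' : Set {x : V // x ≠ v}} {x y : {x : V // x ≠ v}} :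
    ReachOutside (Gdel G v) T' x y ↔
      ReachOutside G (insert v (Subtype.val '' T')) (x : V) (y : V) := by
  conv_lhs => rw [show T' = {z : {x : V // x ≠ v} | (z : V) ∈ Subtype.val '' T'}
    from preim_im.symm]
  exact reach_del_iff

lemma sep_del_iff {T' : Set {x : V // x ≠ v}} {p q : {x : V // x ≠ v}} :
    IsSeparator (Gdel G v) p q T' ↔ SepDel G v (p : V) (q : V) (Subtype.val '' T') := by
  unfold IsSeparator SepDel
  refine and_congr Iff.rfl (and_congr ?_ (and_congr ?_ (not_congr reach_del_iff')))
  · exact (not_congr Subtype.val_injective.mem_set_image.symm)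
  · exact (not_congr Subtype.val_injective.mem_set_image.symm)

lemma minsep_del_iff {S₀ : Set V} (hS : v ∉ S₀) :
    IsMinimalSeparator (Gdel G v) {x : {x : V // x ≠ v} | (x : V) ∈ S₀} ↔ MinsepDel G v S₀ := by
  constructor
  · rintro ⟨p, q, hpq, hsep, hmin⟩
    refine ⟨(p : V), (q : V), p.2, q.2, fun hh => hpq (Subtype.ext hh), ?_, ?_⟩
    · have := sep_del_iff.1 hsep
      rwa [im_preim hS] at this
    · intro T hTsub hTne hsepT
      have hvT : v ∉ T := fun hh => hS (hTsub hh)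
      have hT' : {x : {x : V // x ≠ v} | (x : V) ∈ T} ⊂
          {x : {x : V // x ≠ v} | (x : V) ∈ S₀} := by
        constructor
        · exact fun x hx => hTsub hx
        · intro hsub
          apply hTne
          ext u
          constructor
          · exact fun hu => hTsub hu
          · intro hu
            have huv : u ≠ v := fun hh => hS (hh ▸ hu)
            exact hsub (show (⟨u, huv⟩ : {x : V // x ≠ v}) ∈ _ from hu)
      exact hmin _ hT' (sep_del_iff.2 (by rwa [im_preim hvT]))
  · rintro ⟨p, q, hpv, hqv, hpq, hsep, hmin⟩
    refine ⟨⟨p, hpv⟩, ⟨q, hqv⟩, fun hh => hpq (congrArg Subtype.val hh), ?_, ?_⟩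
    · exact sep_del_iff.2 (by rwa [im_preim hS])
    · intro T' hss hsepT'
      have hsub : Subtype.val '' T' ⊆ S₀ := by
        rintro u ⟨x, hx, rfl⟩
        exact hss.1 hx
      have hne : Subtype.val '' T' ≠ S₀ := by
        intro hh
        obtain ⟨x, hxS, hxT⟩ := Set.exists_of_ssubset hss
        exact hxT (Subtype.val_injective.mem_set_image.mp (hh ▸ (hxS : (x : V) ∈ S₀)))
      exact hmin _ hsub hne (sep_del_iff.1 hsepT')

lemma moplex_del_iff {M : Set V} (hvM : v ∉ M) :
    IsMoplex (Gdel G v) {x : {x : V // x ≠ v} | (x : V) ∈ M} ↔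
      (M.Nonempty ∧ G.IsClique M ∧ ModuleDel G v M ∧
       (∀ Y : Set V, v ∉ Y → M ⊆ Y → G.IsClique Y → ModuleDel G v Y → Y = M) ∧
       (setNbhd G M \ {v} = ∅ ∨ MinsepDel G v (setNbhd G M \ {v}))) := by
  have hset : setNbhd (Gdel G v) {x : {x : V // x ≠ v} | (x : V) ∈ M} =
      {x : {x : V // x ≠ v} | (x : V) ∈ setNbhd G M \ {v}} := by
    rw [setNbhd_del hvM]
    ext x
    simp only [Set.mem_setOf_eq, Set.mem_diff, Set.mem_singleton_iff]
    exact ⟨fun h => ⟨h, x.2⟩, fun h => h.1⟩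
  have hSv : v ∉ setNbhd G M \ {v} := by simp
  constructor
  · rintro ⟨hne, ⟨hclq, hmod⟩, hmax, hsep⟩
    refine ⟨?_, (clique_del_iff hvM).1 hclq, (module_del_iff hvM).1 hmod,
      (max_del_iff hvM).1 hmax, ?_⟩
    · obtain ⟨x, hx⟩ := hne; exact ⟨(x : V), hx⟩
    · rcases hsep with h0 | hmin
      · left
        rw [hset] at h0
        ext u
        simp only [Set.mem_empty_iff_false, iff_false]
        intro hu
        have huv : u ≠ v := fun hh => hu.2 (by simp [hh])
        exact (Set.eq_empty_iff_forall_notMem.1 h0) ⟨u, huv⟩ hu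
      · right
        rw [hset] at hmin
        exact (minsep_del_iff hSv).1 hmin
  · rintro ⟨hne, hclq, hmod, hmax, hsep⟩
    refine ⟨?_, ⟨(clique_del_iff hvM).2 hclq, (module_del_iff hvM).2 hmod⟩,
      (max_del_iff hvM).2 hmax, ?_⟩
    · obtain ⟨m, hm⟩ := hne
      exact ⟨⟨m, fun hh => hvM (hh ▸ hm)⟩, hm⟩
    · rcases hsep with h0 | hmin
      · left
        rw [hset, h0]
        ext x
        simp
      · right
        rw [hset]
        exact (minsep_del_iff hSv).2 hmin

/-- `L1` analogue in the deleted world. -/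
lemma minsepDel_full {T₀ : Set V} {p q : V} (hpv : p ≠ v)
    (hsep : SepDel G v p q T₀)
    (hmin : ∀ T, T ⊆ T₀ → T ≠ T₀ → ¬ SepDel G v p q T) :
    ∀ s ∈ T₀, ∃ x, ReachOutside G (insert v T₀) p x ∧ G.Adj x s := by
  intro s hs
  have hTne : T₀ \ {s} ≠ T₀ := by
    intro hh
    have : s ∈ T₀ \ {s} := hh.symm ▸ hs
    exact this.2 rfl
  have hns := hmin _ Set.diff_subset hTne
  have hR : ReachOutside G (insert v (T₀ \ {s})) p q := by
    by_contra hR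
    exact hns ⟨hsep.1, fun h => hsep.2.1 h.1, fun h => hsep.2.2.1 h.1, hR⟩
  obtain ⟨w, hw⟩ := hR
  have hpi : p ∉ insert v T₀ := by simp [Set.mem_insert_iff, hpv, hsep.2.1]
  rcases walk_split (S := insert v T₀) w hpi with hr | ⟨s', hs', hsup, z, hz, hzs⟩
  · exact absurd hr hsep.2.2.2
  · have hss : s' = s := by
      have h1 := hw s' hsup
      rcases Set.mem_insert_iff.1 hs' with rfl | hT0
      · exact absurd (Set.mem_insert _ _) h1
      · by_contra hne
        exact h1 (Set.mem_insert_of_mem _ ⟨hT0, hne⟩)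
    exact ⟨z, hz, hss ▸ hzs⟩

lemma sepDel_symm {p q : V} {S : Set V} (h : SepDel G v p q S) : SepDel G v q p S :=
  ⟨fun ha => h.1 ha.symm, h.2.2.1, h.2.1, fun hr => h.2.2.2 (reach_symm hr)⟩

end Bridge


/-! ### Extracting arcs from induced cycles -/

section Arc

variable {G : SimpleGraph V}

private lemma interior_of_path {x yk : V} (q : G.Walk x yk) (hnd : q.support.Nodup)
    (hxy : x ≠ yk) (hnadj : ¬ G.Adj x yk) :
    ∃ (y z : V) (mid : G.Walk y z), G.Adj x y ∧ G.Adj z yk ∧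
      ∀ u ∈ mid.support, u ∈ q.support ∧ u ≠ x ∧ u ≠ yk := by
  cases q with
  | nil => exact absurd rfl hxy
  | @cons _ w' _ h₃ q₅ =>
    obtain ⟨z₁, q₀, h₄, heq⟩ := Walk.exists_cons_eq_concat h₃ q₅
    rw [heq] at hnd ⊢
    cases q₀ with
    | nil => exact absurd h₄ hnadj
    | @cons _ y₁ _ h₃' mid =>
      refine ⟨y₁, z₁, mid, h₃', h₄, ?_⟩
      have hsup : ((Walk.cons h₃' mid).concat h₄).support = (x :: mid.support) ++ [yk] := by
        rw [Walk.support_concat, Walk.support_cons]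
      rw [hsup] at hnd ⊢
      obtain ⟨h1, _, h3⟩ := List.nodup_append'.mp hnd
      intro u hu
      refine ⟨?_, ?_, ?_⟩
      · exact List.mem_append_left _ (List.mem_cons_of_mem _ hu)
      · intro hux
        exact (List.nodup_cons.mp h1).1 (hux ▸ hu)
      · intro huy
        exact h3 (List.mem_cons_of_mem _ hu) (by simp [huy])

private lemma arc_core {v a b : V} (c' : G.Walk v v)
    (hnd : c'.support.tail.Nodup)
    (hind : ∀ x ∈ c'.support, ∀ y ∈ c'.support, G.Adj x y → s(x, y) ∈ c'.edges)
    (ha : a ∈ c'.support) (hb : b ∈ c'.support)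
    (hva : G.Adj v a) (hvb : G.Adj v b) (hab : a ≠ b) (hnadj : ¬ G.Adj a b) :
    ∃ (y z : V) (mid : G.Walk y z), G.Adj a y ∧ G.Adj z b ∧
      ∀ u ∈ mid.support, ¬ G.Adj v u ∧ u ≠ v ∧ u ≠ a ∧ u ≠ b := by
  cases c' with
  | nil =>
    simp only [Walk.support_nil, List.mem_singleton] at ha
    exact absurd (ha ▸ hva) G.irrefl
  | @cons _ x _ hvx p =>
    have hndp : p.support.Nodup := by simpa using hnd
    cases p with
    | nil => exact (G.irrefl hvx).elim
    | @cons _ x₂ _ h₅ p₅ =>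
      obtain ⟨yk, q, hyv, heq⟩ := Walk.exists_cons_eq_concat h₅ p₅
      rw [heq] at hndp hind ha hb
      have hsupp : (q.concat hyv).support = q.support ++ [v] := by
        rw [Walk.support_concat]
      rw [hsupp] at hndp
      have hqnd : q.support.Nodup := (List.nodup_append'.mp hndp).1
      have hvq : v ∉ q.support := by
        intro hv
        exact (List.nodup_append'.mp hndp).2.2 hv (by simp)
      have hedg : (Walk.cons hvx (q.concat hyv)).edges = s(v, x) :: (q.edges ++ [s(yk, v)]) := by
        rw [Walk.edges_cons, Walk.edges_concat]
        simp [List.concat_eq_append]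
      have hqsub : ∀ u ∈ q.support, u ∈ (Walk.cons hvx (q.concat hyv)).support := by
        intro u hu
        rw [Walk.support_cons, hsupp]
        exact List.mem_cons_of_mem _ (List.mem_append_left _ hu)
      have hvne_x : v ≠ x := hvx.ne
      have hvne_y : v ≠ yk := hyv.ne'
      have hvedge : ∀ u, G.Adj v u → u ∈ (Walk.cons hvx (q.concat hyv)).support →
          u = x ∨ u = yk := by
        intro u hadj hu
        have he := hind v (Walk.start_mem_support _) u hu hadj
        rw [hedg] at he
        rcases List.mem_cons.mp he with he1 | he2
        · rcases Sym2.eq_iff.mp he1 with ⟨_, h2⟩ | ⟨h1, _⟩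
          · exact Or.inl h2
          · exact absurd h1 hvne_x
        · rcases List.mem_append.mp he2 with he3 | he4
          · exact absurd (Walk.fst_mem_support_of_mem_edges q he3) hvq
          · rcases Sym2.eq_iff.mp (List.mem_singleton.mp he4) with ⟨h1, _⟩ | ⟨_, h2⟩
            · exact absurd h1 hvne_y
            · exact Or.inr h2
      have hprops : ∀ u ∈ q.support, u ≠ x → u ≠ yk → ¬ G.Adj v u ∧ u ≠ v := by
        intro u hu h1 h2
        constructor
        · intro hadj
          rcases hvedge u hadj (hqsub u hu) with rfl | rfl
          · exact h1 rfl
          · exact h2 rfl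
        · intro hv
          exact hvq (hv ▸ hu)
      have hax := hvedge a hva ha
      have hbx := hvedge b hvb hb
      have hxy : x ≠ yk := by
        rcases hax with rfl | rfl <;> rcases hbx with rfl | rfl
        · exact absurd rfl hab
        · exact hab
        · exact hab.symm
        · exact absurd rfl hab
      rcases hax with rfl | rfl
      · rcases hbx with rfl | rfl
        · exact absurd rfl hab
        · obtain ⟨y, z, mid, h1, h2, h3⟩ := interior_of_path q hqnd hxy hnadj
          refine ⟨y, z, mid, h1, h2, ?_⟩
          intro u hu
          obtain ⟨hu1, hu2, hu3⟩ := h3 u hu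
          obtain ⟨hh1, hh2⟩ := hprops u hu1 hu2 hu3
          exact ⟨hh1, hh2, hu2, hu3⟩
      · rcases hbx with rfl | rfl
        · obtain ⟨y, z, mid, h1, h2, h3⟩ := interior_of_path q.reverse
            (by rw [Walk.support_reverse]; exact List.nodup_reverse.mpr hqnd)
            hxy.symm hnadj
          refine ⟨y, z, mid, h1, h2, ?_⟩
          intro u hu
          obtain ⟨hu1, hu2, hu3⟩ := h3 u hu
          rw [Walk.support_reverse, List.mem_reverse] at hu1
          obtain ⟨hh1, hh2⟩ := hprops u hu1 hu3 hu2
          exact ⟨hh1, hh2, hu2, hu3⟩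
        · exact absurd rfl hab.symm

lemma arc_of_avoidable {v a b : V} (hav : Avoidable G v) (hext : IsExtension G v a b) :
    ∃ (y z : V) (mid : G.Walk y z), G.Adj a y ∧ G.Adj z b ∧
      ∀ u ∈ mid.support, ¬ G.Adj v u ∧ u ≠ v ∧ u ≠ a ∧ u ≠ b := by
  classical
  obtain ⟨hab, hva, hvb, hnadj⟩ := hext
  obtain ⟨w, c, ⟨hcyc, hind⟩, hac, hvc, hbc⟩ := hav a b ⟨hab, hva, hvb, hnadj⟩
  have hcnil : ¬ c.Nil := by
    intro h
    cases c with
    | nil =>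
      simp only [Walk.support_nil, List.mem_singleton] at hac hvc
      exact G.irrefl (hvc ▸ hac ▸ hva)
    | cons h' p => exact Walk.not_nil_cons h
  have hwtail : w ∈ c.support.tail := by
    cases c with
    | nil => exact absurd Walk.Nil.nil hcnil
    | cons h p => simpa using p.end_mem_support
  have hvtail : v ∈ c.support.tail := by
    rcases List.mem_cons.mp (by rw [← Walk.support_eq_cons]; exact hvc) with rfl | h
    · exact hwtail
    · exact h
  have htail := c.support_rotate v hvc
  have hmemsup : ∀ u, u ∈ (c.rotate v hvc).support ↔ u ∈ c.support := by
    intro u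
    rw [Walk.support_eq_cons (c.rotate v hvc), Walk.support_eq_cons c]
    simp only [List.mem_cons]
    constructor
    · rintro (rfl | hu)
      · exact Or.inr hvtail
      · exact Or.inr (htail.mem_iff.mp hu)
    · rintro (rfl | hu)
      · exact Or.inr (htail.mem_iff.mpr hwtail)
      · exact Or.inr (htail.mem_iff.mpr hu)
  have hmemedg : ∀ e, e ∈ (c.rotate v hvc).edges ↔ e ∈ c.edges :=
    fun e => (c.rotate_edges v hvc).mem_iff
  have hnd : (c.rotate v hvc).support.tail.Nodup :=
    (hcyc.rotate hvc).support_nodup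
  have hind' : ∀ x ∈ (c.rotate v hvc).support, ∀ y ∈ (c.rotate v hvc).support,
      G.Adj x y → s(x, y) ∈ (c.rotate v hvc).edges := by
    intro x hx y hy hxy
    exact (hmemedg _).mpr (hind x ((hmemsup x).mp hx) y ((hmemsup y).mp hy) hxy)
  exact arc_core (c.rotate v hvc) hnd hind' ((hmemsup a).mpr hac) ((hmemsup b).mpr hbc)
    hva hvb hab hnadj

end Arc


/-! ### Main argument, forward direction -/

section Main

variable {G : SimpleGraph V} {v : V} {M : Set V}

lemma fwd_max (hav : Avoidable G v) (hvM : v ∉ M) (hmo : IsMoplex G M)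
    (hnm : ¬ Moplicial G v) :
    ∀ Y : Set V, v ∉ Y → M ⊆ Y → G.IsClique Y → ModuleDel G v Y → Y = M := by
  obtain ⟨⟨m, hm⟩, ⟨hclq, hmod⟩, hmax, hsep⟩ := hmo
  intro Y hvY hMY hYclq hYmod
  by_cases huni : (∀ x ∈ Y, G.Adj v x) ∨ (∀ x ∈ Y, ¬ G.Adj v x)
  · refine hmax Y hMY ⟨hYclq, fun u hu => ?_⟩
    rcases eq_or_ne u v with rfl | hne
    · exact huni
    · exact hYmod u hu hne
  · exfalso
    push_neg at huni
    obtain ⟨⟨b0, hb0Y, hb0n⟩, a0, ha0Y, ha0a⟩ := huni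
    rcases hmod v hvM with hvall | hvnone
    · -- config B : v is adjacent to all of M
      have hYvcm : IsCliqueModule G {y | y ∈ Y ∧ G.Adj v y} := by
        constructor
        · exact fun x hx y hy hne => hYclq hx.1 hy.1 hne
        · intro z hz
          rcases eq_or_ne z v with rfl | hzv
          · exact Or.inl fun x hx => hx.2
          · by_cases hzY : z ∈ Y
            · have hnvz : ¬ G.Adj v z := fun hh => hz ⟨hzY, hh⟩
              exact Or.inl fun x hx => hYclq hzY hx.1 (fun h => hnvz (h.symm ▸ hx.2))
            · rcases hYmod z hzY hzv with h1 | h0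
              · exact Or.inl fun x hx => h1 x hx.1
              · exact Or.inr fun x hx => h0 x hx.1
      have hYvM : {y | y ∈ Y ∧ G.Adj v y} = M :=
        hmax _ (fun x hx => ⟨hMY hx, hvall x hx⟩) hYvcm
      have hb0M : b0 ∉ M := by
        intro h
        rw [← hYvM] at h
        exact hb0n h.2
      have hb0S : b0 ∈ setNbhd G M :=
        ⟨hb0M, m, hm, hYclq hb0Y (hMY hm) (by rintro rfl; exact hb0M hm)⟩
      have hvS : v ∈ setNbhd G M := ⟨hvM, m, hm, hvall m hm⟩
      rcases hsep with h0 | ⟨p, q, hpq, hmin⟩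
      · rw [h0] at hvS; exact hvS
      · have hside : ∀ r : V,
            (∀ s ∈ setNbhd G M, ∃ x, ReachOutside G (setNbhd G M) r x ∧ G.Adj x s) →
            r ∉ setNbhd G M → r ∈ M := by
          intro r hfull hrS
          obtain ⟨x, hxr, hxb⟩ := hfull b0 hb0S
          have hxS : x ∉ setNbhd G M := reach_right hxr
          have hxM : x ∈ M := by
            by_cases hxY : x ∈ Y
            · by_cases hxM' : x ∈ M
              · exact hxM'
              · exact absurd ⟨hxM', m, hm, hYclq hxY (hMY hm)
                  (by rintro rfl; exact hxM' hm)⟩ hxS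
            · have hxv : x ≠ v := by rintro rfl; exact hxS hvS
              rcases hYmod x hxY hxv with h1 | h0
              · exact absurd ⟨fun h => hxY (hMY h), m, hm, h1 m (hMY hm)⟩ hxS
              · exact absurd hxb (h0 b0 hb0Y)
          exact reach_stays_in_module hxM (reach_symm hxr)
        have hpM : p ∈ M := hside p (minsep_full hmin) hmin.1.2.1
        have hqM : q ∈ M := hside q (minsep_full (minsep_symm hmin)) hmin.1.2.2.1
        exact hmin.1.1 (hclq hpM hqM hpq)
    · -- config C : v is adjacent to no vertex of M
      have ha0M : a0 ∉ M := fun h => hvnone a0 h ha0a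
      have ha0S : a0 ∈ setNbhd G M :=
        ⟨ha0M, m, hm, hYclq ha0Y (hMY hm) (by rintro rfl; exact ha0M hm)⟩
      have hNb : ∀ u, G.Adj a0 u → u ∈ M ∨ u ∈ setNbhd G M ∨ u = v := by
        intro u hu
        by_cases huY : u ∈ Y
        · by_cases huM : u ∈ M
          · exact Or.inl huM
          · exact Or.inr (Or.inl ⟨huM, m, hm, hYclq huY (hMY hm)
              (by rintro rfl; exact huM hm)⟩)
        · rcases eq_or_ne u v with rfl | huv
          · exact Or.inr (Or.inr rfl)
          · rcases hYmod u huY huv with h1 | h0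
            · exact Or.inr (Or.inl ⟨fun h => huY (hMY h), m, hm, h1 m (hMY hm)⟩)
            · exact absurd hu.symm (h0 a0 ha0Y)
      -- moplex construction around v
      have hXcm := maxCM_cm G v
      have hXmax := maxCM_max G v
      have hvX : v ∈ maxCM G v := mem_maxCM G v
      have hXM : ∀ x ∈ maxCM G v, x ∉ M := by
        intro x hx hxM
        have hxv : x ≠ v := by rintro rfl; exact hvM hxM
        exact hvnone x hxM (hXcm.1 hvX hx (Ne.symm hxv))
      have hmX : m ∉ maxCM G v := fun h => hXM m h hm
      have hWadj : ∀ w ∈ setNbhd G (maxCM G v), G.Adj v w := fun w hw =>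
        (setNbhd_adj_all hXcm.2 hw v hvX).symm
      have hmW : m ∉ setNbhd G (maxCM G v) := fun h => hvnone m hm (hWadj m h)
      have hfull : ∀ w ∈ setNbhd G (maxCM G v),
          ∃ y, ReachOutside G (setNbhd G (maxCM G v)) m y ∧ G.Adj w y := by
        intro w hw
        have hvw : G.Adj v w := hWadj w hw
        have hwv : w ≠ v := fun h => G.irrefl (h ▸ hvw)
        have hwM : w ∉ M := fun h => hvnone w h hvw
        by_cases hwS : w ∈ setNbhd G M
        · exact ⟨m, reach_refl hmW, setNbhd_adj_all hmod hwS m hm⟩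
        · have hwa : ¬ G.Adj w a0 := by
            intro hh
            rcases hNb w hh.symm with h | h | h
            · exact hwM h
            · exact hwS h
            · exact hwv h
          have hwa0 : w ≠ a0 := by rintro rfl; exact hwS ha0S
          obtain ⟨y, z, mid, hwy, hza, hmid⟩ :=
            arc_of_avoidable hav ⟨hwa0, hvw, ha0a, hwa⟩
          by_cases hSmid : ∃ u ∈ mid.support, u ∈ setNbhd G M
          · obtain ⟨u, hus, huS⟩ := hSmid
            have hmidW : ∀ u' ∈ mid.support, u' ∉ setNbhd G (maxCM G v) := fun u' hu' hin =>
              (hmid u' hu').1 (hWadj u' hin)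
            exact ⟨y, reach_trans
              (reach_adj (setNbhd_adj_all hmod huS m hm).symm hmW (hmidW u hus))
              (reach_symm (walk_reach mid hmidW u hus)), hwy⟩
          · push_neg at hSmid
            exfalso
            have hreach : ReachOutside G (setNbhd G M) w z := by
              refine ⟨Walk.cons hwy mid, ?_⟩
              intro u hu
              rcases (by simpa using hu : u = w ∨ u ∈ mid.support) with rfl | hu'
              · exact hwS
              · exact hSmid u hu'
            have hzM : z ∉ M := reach_stays_out_module (Set.Subset.refl _) hwM hreach
            rcases hNb z hza.symm with h | h | h
            · exact hzM h
            · exact hSmid z mid.end_mem_support h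
            · exact (hmid z mid.end_mem_support).2.1 h
      exact hnm ⟨maxCM G v, moplex_of_full hXcm hXmax ⟨v, hvX⟩ hmX hmW hfull, hvX⟩

lemma fwd_sep (hav : Avoidable G v) (hvM : v ∉ M) (hmo : IsMoplex G M)
    (hnm : ¬ Moplicial G v) :
    setNbhd G M \ {v} = ∅ ∨ MinsepDel G v (setNbhd G M \ {v}) := by
  obtain ⟨⟨m, hm⟩, ⟨hclq, hmod⟩, hmax, hsep⟩ := hmo
  rcases hsep with h0 | ⟨p, q, hpq, hmin⟩
  · left; rw [h0]; simp
  · by_cases hS'0 : setNbhd G M \ {v} = ∅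
    · exact Or.inl hS'0
    right
    have hfullp := minsep_full hmin
    have hfullq := minsep_full (minsep_symm hmin)
    have hSadj : ∀ s ∈ setNbhd G M, ∀ x ∈ M, G.Adj s x := fun s hs => setNbhd_adj_all hmod hs
    have hmS : m ∉ setNbhd G M := fun h => h.1 hm
    by_cases hvS : v ∈ setNbhd G M
    · -- v sees M : the separator minus v still works in G - v
      have hins : insert v (setNbhd G M \ {v}) = setNbhd G M := by
        rw [Set.insert_diff_singleton, Set.insert_eq_self.mpr hvS]
      have hrex : ∃ r, r ∉ M ∧ r ∉ setNbhd G M ∧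
          ∀ s ∈ setNbhd G M, ∃ x, ReachOutside G (setNbhd G M) r x ∧ G.Adj x s := by
        by_cases hpM : p ∈ M
        · have hqM : q ∉ M := fun h => hmin.1.1 (hclq hpM h hpq)
          exact ⟨q, hqM, hmin.1.2.2.1, hfullq⟩
        · exact ⟨p, hpM, hmin.1.2.1, hfullp⟩
      obtain ⟨r, hrM, hrS, hfullr⟩ := hrex
      have hrv : r ≠ v := by rintro rfl; exact hrS hvS
      refine ⟨m, r, (by rintro rfl; exact hvM hm), hrv,
        (by rintro rfl; exact hrM hm), ⟨?_, ?_, ?_, ?_⟩, ?_⟩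
      · intro hh
        exact hrS ⟨hrM, m, hm, hh.symm⟩
      · exact fun h => h.1.1 hm
      · exact fun h => hrS h.1
      · rw [hins]
        intro hr
        exact hrM (reach_stays_in_module hm hr)
      · intro T hTsub hTne hsepT
        obtain ⟨s, hsS', hsT⟩ := Set.exists_of_ssubset (hTsub.ssubset_of_ne hTne)
        apply hsepT.2.2.2
        obtain ⟨x, hxr, hxs⟩ := hfullr s hsS'.1
        have hTS : insert v T ⊆ setNbhd G M := by
          rw [← hins]; exact Set.insert_subset_insert hTsub
        have hmT : m ∉ insert v T := fun h => hmS (hTS h)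
        have hsmem : s ∉ insert v T := by
          intro h
          rcases Set.mem_insert_iff.mp h with rfl | h'
          · exact hsS'.2 rfl
          · exact hsT h'
        have hxmem : x ∉ insert v T := fun h => (reach_right hxr) (hTS h)
        exact reach_trans (reach_adj (hSadj s hsS'.1 m hm).symm hmT hsmem)
          (reach_trans (reach_adj hxs.symm hsmem hxmem)
            (reach_mono hTS (reach_symm hxr)))
    · -- v does not see M
      have hSv : setNbhd G M \ {v} = setNbhd G M := by
        ext u
        simp only [Set.mem_diff, Set.mem_singleton_iff]
        exact ⟨fun h => h.1, fun h => ⟨h, by rintro rfl; exact hvS h⟩⟩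
      rw [hSv]
      have hvnone : ∀ x ∈ M, ¬ G.Adj v x := fun x hx hadj => hvS ⟨hvM, x, hx, hadj⟩
      by_cases hgood : ∃ d, d ∉ M ∧ d ∉ setNbhd G M ∧ d ≠ v ∧
          ∀ s ∈ setNbhd G M, ∃ x, ReachOutside G (insert v (setNbhd G M)) d x ∧ G.Adj x s
      · obtain ⟨d, hdM, hdS, hdv, hdfull⟩ := hgood
        refine ⟨m, d, (by rintro rfl; exact hvM hm), hdv,
          (by rintro rfl; exact hdM hm), ⟨?_, ?_, ?_, ?_⟩, ?_⟩
        · intro hh; exact hdS ⟨hdM, m, hm, hh.symm⟩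
        · exact hmS
        · exact hdS
        · intro hr
          exact hdM (reach_stays_in_module hm (reach_mono (Set.subset_insert _ _) hr))
        · intro T hTsub hTne hsepT
          obtain ⟨s, hsS, hsT⟩ := Set.exists_of_ssubset (hTsub.ssubset_of_ne hTne)
          apply hsepT.2.2.2
          obtain ⟨x, hxr, hxs⟩ := hdfull s hsS
          have hsub2 : insert v T ⊆ insert v (setNbhd G M) := Set.insert_subset_insert hTsub
          have hmT : m ∉ insert v T := by
            intro h
            rcases Set.mem_insert_iff.mp h with rfl | h'
            · exact hvM hm
            · exact hmS (hTsub h')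
          have hsT' : s ∉ insert v T := by
            intro h
            rcases Set.mem_insert_iff.mp h with rfl | h'
            · exact hvS hsS
            · exact hsT h'
          exact reach_trans (reach_adj (hSadj s hsS m hm).symm hmT hsT')
            (reach_trans (reach_adj hxs.symm hsT' (fun h => (reach_right hxr) (hsub2 h)))
              (reach_mono hsub2 (reach_symm hxr)))
      · -- hard subcase : no component of `G - v - S` away from `M` is full
        exfalso
        push_neg at hgood
        have hvreach : ∃ r, ReachOutside G (setNbhd G M) r v ∧
            ∀ s ∈ setNbhd G M, ∃ x, ReachOutside G (setNbhd G M) r x ∧ G.Adj x s := by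
          have hstep : ∀ r, r ∉ M → r ∉ setNbhd G M →
              (∀ s ∈ setNbhd G M, ∃ x, ReachOutside G (setNbhd G M) r x ∧ G.Adj x s) →
              ReachOutside G (setNbhd G M) r v := by
            intro r hrM hrS hfullr
            by_contra hnr
            have hrv : r ≠ v := by rintro rfl; exact hnr (reach_refl hrS)
            obtain ⟨s, hsS, hbad⟩ := hgood r hrM hrS hrv
            obtain ⟨x, hxr, hxs⟩ := hfullr s hsS
            refine hbad x ?_ hxs
            obtain ⟨wlk, hwlk⟩ := hxr
            refine ⟨wlk, fun u hu hmem => ?_⟩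
            rcases Set.mem_insert_iff.mp hmem with rfl | h'
            · exact hnr (walk_reach wlk hwlk u hu)
            · exact hwlk u hu h'
          by_cases hpM : p ∈ M
          · have hqM : q ∉ M := fun h => hmin.1.1 (hclq hpM h hpq)
            exact ⟨q, hstep q hqM hmin.1.2.2.1 hfullq, hfullq⟩
          · exact ⟨p, hstep p hpM hmin.1.2.1 hfullp, hfullp⟩
        obtain ⟨r, hrv, hfullr⟩ := hvreach
        have hFfull : ∀ s ∈ setNbhd G M, ∃ x, ReachOutside G (setNbhd G M) v x ∧ G.Adj x s :=
          fun s hs =>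
            let ⟨x, h1, h2⟩ := hfullr s hs
            ⟨x, reach_trans (reach_symm hrv) h1, h2⟩
        have hXcm := maxCM_cm G v
        have hXmax := maxCM_max G v
        have hvX : v ∈ maxCM G v := mem_maxCM G v
        have hXM : ∀ x ∈ maxCM G v, x ∉ M := by
          intro x hx hxM
          have hxv : x ≠ v := by rintro rfl; exact hvM hxM
          exact hvnone x hxM (hXcm.1 hvX hx (Ne.symm hxv))
        have hmX : m ∉ maxCM G v := fun h => hXM m h hm
        have hWadj : ∀ w ∈ setNbhd G (maxCM G v), G.Adj v w := fun w hw =>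
          (setNbhd_adj_all hXcm.2 hw v hvX).symm
        have hmW : m ∉ setNbhd G (maxCM G v) := fun h => hvnone m hm (hWadj m h)
        have hfull : ∀ w ∈ setNbhd G (maxCM G v),
            ∃ y, ReachOutside G (setNbhd G (maxCM G v)) m y ∧ G.Adj w y := by
          intro w hw
          have hvw : G.Adj v w := hWadj w hw
          have hwv : w ≠ v := fun h => G.irrefl (h ▸ hvw)
          have hwM : w ∉ M := fun h => hvnone w h hvw
          by_cases hwS : w ∈ setNbhd G M
          · exact ⟨m, reach_refl hmW, hSadj w hwS m hm⟩
          · obtain ⟨s, hsS, hbad⟩ := hgood w hwM hwS hwv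
            have hwins : w ∉ insert v (setNbhd G M) := by
              simp only [Set.mem_insert_iff]
              push_neg
              exact ⟨hwv, hwS⟩
            have hsw : ¬ G.Adj s w := fun hh => hbad w (reach_refl hwins) hh.symm
            by_cases hsv : G.Adj v s
            · -- extension (w, s)
              obtain ⟨y, z, mid, hwy, hzs, hmid⟩ := arc_of_avoidable hav
                ⟨(by rintro rfl; exact hwS hsS), hvw, hsv, fun hh => hsw hh.symm⟩
              by_cases hSmid : ∃ u ∈ mid.support, u ∈ setNbhd G M
              · obtain ⟨u, hus, huS⟩ := hSmid
                have hmidW : ∀ u' ∈ mid.support, u' ∉ setNbhd G (maxCM G v) :=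
                  fun u' hu' hin => (hmid u' hu').1 (hWadj u' hin)
                exact ⟨y, reach_trans
                  (reach_adj (hSadj u huS m hm).symm hmW (hmidW u hus))
                  (reach_symm (walk_reach mid hmidW u hus)), hwy⟩
              · exfalso
                push_neg at hSmid
                refine hbad z ⟨Walk.cons hwy mid, ?_⟩ hzs
                intro u hu
                rcases (by simpa using hu : u = w ∨ u ∈ mid.support) with rfl | hu'
                · exact hwins
                · intro hmem
                  rcases Set.mem_insert_iff.mp hmem with rfl | h'
                  · exact (hmid u hu').2.1 rfl
                  · exact hSmid u hu' h'
            · -- s not adjacent to v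
              by_contra hngoal
              push_neg at hngoal
              have hNB : ∀ z', G.Adj v z' → ¬ G.Adj w z' → z' ≠ w →
                  ∃ d, ReachOutside G (insert v (setNbhd G M)) w d ∧ G.Adj z' d := by
                intro z' hvz' hwz' hz'w
                obtain ⟨y, z, mid, hwy, hzz, hmid⟩ := arc_of_avoidable hav
                  ⟨hz'w.symm, hvw, hvz', hwz'⟩
                by_cases hSmid : ∃ u ∈ mid.support, u ∈ setNbhd G M
                · obtain ⟨u, hus, huS⟩ := hSmid
                  have hmidW : ∀ u' ∈ mid.support, u' ∉ setNbhd G (maxCM G v) :=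
                    fun u' hu' hin => (hmid u' hu').1 (hWadj u' hin)
                  exact absurd hwy (hngoal y (reach_trans
                    (reach_adj (hSadj u huS m hm).symm hmW (hmidW u hus))
                    (reach_symm (walk_reach mid hmidW u hus))))
                · push_neg at hSmid
                  refine ⟨z, ⟨Walk.cons hwy mid, ?_⟩, hzz.symm⟩
                  intro u hu
                  rcases (by simpa using hu : u = w ∨ u ∈ mid.support) with rfl | hu'
                  · exact hwins
                  · intro hmem
                    rcases Set.mem_insert_iff.mp hmem with rfl | h'
                    · exact (hmid u hu').2.1 rfl
                    · exact hSmid u hu' h'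
              have hCL : ∀ x, ReachOutside G (setNbhd G M) v x → x ≠ v →
                  ReachOutside G (insert v (setNbhd G M)) w x := by
                intro x hx hxv
                obtain ⟨wlk, hwlk⟩ := reach_symm hx
                have hxi : x ∉ insert v (setNbhd G M) := by
                  simp only [Set.mem_insert_iff]
                  push_neg
                  exact ⟨hxv, reach_right hx⟩
                rcases walk_split (S := insert v (setNbhd G M)) wlk hxi with
                  hr | ⟨s', hs', hssup, z', hz', hz's⟩
                · exact ((reach_right hr) (Set.mem_insert v _)).elim
                · have hs'v : s' = v := by
                    rcases Set.mem_insert_iff.mp hs' with rfl | h'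
                    · rfl
                    · exact absurd h' (hwlk s' hssup)
                  subst hs'v
                  by_cases hz'w : z' = w
                  · exact reach_symm (hz'w ▸ hz')
                  · by_cases hadjwz' : G.Adj w z'
                    · exact reach_trans
                        (reach_adj hadjwz' hwins (reach_right hz')) (reach_symm hz')
                    · obtain ⟨d, hd1, hd2⟩ := hNB z' hz's.symm hadjwz' hz'w
                      exact reach_trans (reach_trans hd1
                        (reach_adj hd2.symm (reach_right hd1) (reach_right hz')))
                        (reach_symm hz')
              obtain ⟨xs, hxsr, hxss⟩ := hFfull s hsS
              have hxsv : xs ≠ v := by rintro rfl; exact hsv hxss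
              exact hbad xs (hCL xs hxsr hxsv) hxss
        exact hnm ⟨maxCM G v, moplex_of_full hXcm hXmax ⟨v, hvX⟩ hmX hmW hfull, hvX⟩

lemma bwd_uniform (hav : Avoidable G v) (hnm : ¬ Moplicial G v) (hvM : v ∉ M)
    (hclq : G.IsClique M) (hmodD : ModuleDel G v M) :
    (∀ x ∈ M, G.Adj v x) ∨ (∀ x ∈ M, ¬ G.Adj v x) := by
  by_contra hcon
  push_neg at hcon
  obtain ⟨⟨b, hbM, hbn⟩, a, haM, haa⟩ := hcon
  have hXcm := maxCM_cm G v
  have hXmax := maxCM_max G v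
  have hvX := mem_maxCM G v
  have hbv : b ≠ v := by rintro rfl; exact hvM hbM
  have hbX : b ∉ maxCM G v := by
    intro h
    exact hbn (hXcm.1 hvX h (Ne.symm hbv))
  have hXM : ∀ x ∈ maxCM G v, x ∉ M := by
    intro x hx hxM
    have hbx : b ≠ x := by rintro rfl; exact hbX hx
    rcases hXcm.2 b hbX with h1 | h0
    · exact hbn (h1 v hvX).symm
    · exact h0 x hx (hclq hbM hxM hbx)
  have hWadj : ∀ w ∈ setNbhd G (maxCM G v), G.Adj v w := fun w hw =>
    (setNbhd_adj_all hXcm.2 hw v hvX).symm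
  have hbW : b ∉ setNbhd G (maxCM G v) := fun h => hbn (hWadj b h)
  have hfull : ∀ w ∈ setNbhd G (maxCM G v),
      ∃ y, ReachOutside G (setNbhd G (maxCM G v)) b y ∧ G.Adj w y := by
    intro w hw
    have hvw := hWadj w hw
    have hwv : w ≠ v := fun h => G.irrefl (h ▸ hvw)
    by_cases hwM : w ∈ M
    · exact ⟨b, reach_refl hbW, hclq hwM hbM (by rintro rfl; exact hbn hvw)⟩
    · by_cases hwall : ∀ x ∈ M, G.Adj w x
      · exact ⟨b, reach_refl hbW, hwall b hbM⟩
      · have hwnone : ∀ x ∈ M, ¬ G.Adj w x := by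
          rcases hmodD w hwM hwv with h1 | h0
          · exact absurd h1 hwall
          · exact h0
        obtain ⟨y, z, mid, hay, hzw, hmid⟩ := arc_of_avoidable hav
          ⟨(by rintro rfl; exact hwM haM), haa, hvw, fun h => hwnone a haM h.symm⟩
        have hyprops := hmid y mid.start_mem_support
        have hyW : y ∉ setNbhd G (maxCM G v) := fun h => hyprops.1 (hWadj y h)
        have hyC : ReachOutside G (setNbhd G (maxCM G v)) b y := by
          by_cases hyM : y ∈ M
          · rcases eq_or_ne b y with rfl | hby
            · exact reach_refl hbW
            · exact reach_adj (hclq hbM hyM hby) hbW hyW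
          · have hyall : ∀ x ∈ M, G.Adj y x := by
              rcases hmodD y hyM hyprops.2.1 with h1 | h0
              · exact h1
              · exact absurd hay.symm (h0 a haM)
            exact reach_adj (hyall b hbM).symm hbW hyW
        have hmidW : ∀ u ∈ mid.support, u ∉ setNbhd G (maxCM G v) :=
          fun u hu hin => (hmid u hu).1 (hWadj u hin)
        exact ⟨z, reach_trans hyC (walk_reach mid hmidW z mid.end_mem_support), hzw.symm⟩
  exact hnm ⟨maxCM G v, moplex_of_full hXcm hXmax ⟨v, hvX⟩ hbX hbW hfull, hvX⟩

lemma bwd_max (hnm : ¬ Moplicial G v) (hvM : v ∉ M)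
    (hne : M.Nonempty) (hclq : G.IsClique M)
    (hmaxD : ∀ Y : Set V, v ∉ Y → M ⊆ Y → G.IsClique Y → ModuleDel G v Y → Y = M)
    (hsepD : setNbhd G M \ {v} = ∅ ∨ MinsepDel G v (setNbhd G M \ {v})) :
    ∀ Y, M ⊆ Y → IsCliqueModule G Y → Y = M := by
  intro Y hMY hYcm
  by_cases hvY : v ∈ Y
  · exfalso
    obtain ⟨m, hm⟩ := hne
    have hYv : Y \ {v} = M := hmaxD _ (by simp)
      (fun x hx => ⟨hMY hx, by rintro rfl; exact hvM hx⟩)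
      (hYcm.1.subset Set.diff_subset)
      (fun u hu huv => by
        rcases hYcm.2 u (fun h => hu ⟨h, huv⟩) with h1 | h0
        · exact Or.inl fun x hx => h1 x hx.1
        · exact Or.inr fun x hx => h0 x hx.1)
    have hYeq : Y = insert v M := by
      rw [← hYv, Set.insert_diff_singleton, Set.insert_eq_self.mpr hvY]
    rw [hYeq] at hYcm
    have hAmax : ∀ Z, insert v M ⊆ Z → IsCliqueModule G Z → Z = insert v M := by
      intro Z hZsub hZcm
      have hvZ : v ∈ Z := hZsub (Set.mem_insert _ _)
      have hZv : Z \ {v} = M := hmaxD _ (by simp)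
        (fun x hx => ⟨hZsub (Set.mem_insert_of_mem _ hx), by rintro rfl; exact hvM hx⟩)
        (hZcm.1.subset Set.diff_subset)
        (fun u hu huv => by
        rcases hZcm.2 u (fun h => hu ⟨h, huv⟩) with h1 | h0
        · exact Or.inl fun x hx => h1 x hx.1
        · exact Or.inr fun x hx => h0 x hx.1)
      rw [← hZv, Set.insert_diff_singleton, Set.insert_eq_self.mpr hvZ]
    have hNA : setNbhd G (insert v M) = setNbhd G M \ {v} := by
      ext u
      constructor
      · rintro ⟨hu1, x, hx, hux⟩
        have huv : u ≠ v := fun h => hu1 (h ▸ Set.mem_insert _ _)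
        have humem : ∀ x ∈ insert v M, G.Adj u x := module_adj_all hYcm.2 hu1 hx hux
        exact ⟨⟨fun h => hu1 (Set.mem_insert_of_mem _ h), m, hm,
          humem m (Set.mem_insert_of_mem _ hm)⟩, by simpa using huv⟩
      · rintro ⟨⟨hu1, x, hx, hux⟩, huv⟩
        have huv' : u ≠ v := by simpa using huv
        exact ⟨by simp [Set.mem_insert_iff, hu1, huv'], x, Set.mem_insert_of_mem _ hx, hux⟩
    have hmop : IsMoplex G (insert v M) := by
      refine ⟨⟨v, Set.mem_insert _ _⟩, hYcm, hAmax, ?_⟩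
      rcases hsepD with h0 | hminD
      · left; rw [hNA, h0]
      · right
        rw [hNA]
        obtain ⟨p, q, hpv, hqv, hpq, ⟨hnadj, hpT, hqT, hnr⟩, hminT⟩ := hminD
        have hNv : ∀ z, G.Adj v z → z ∉ setNbhd G M \ {v} → z ∈ M := by
          intro z hvz hzT
          by_cases hzM : z ∈ M
          · exact hzM
          · exfalso
            have hzv : z ≠ v := hvz.ne'
            have hzi : z ∉ insert v M := by simp [Set.mem_insert_iff, hzM, hzv]
            rcases hYcm.2 z hzi with h1 | h0
            · exact hzT ⟨⟨hzM, m, hm, h1 m (Set.mem_insert_of_mem _ hm)⟩, by simpa using hzv⟩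
            · exact h0 v (Set.mem_insert _ _) hvz.symm
        refine ⟨p, q, hpq, ⟨⟨hnadj, hpT, hqT, ?_⟩, ?_⟩⟩
        · intro hr
          exact hnr (bypass hclq hNv hpv hqv hr)
        · intro T' hss hsepT'
          exact hminT T' hss.subset hss.ne ⟨hsepT'.1, hsepT'.2.1, hsepT'.2.2.1,
            fun hr => hsepT'.2.2.2 (reach_mono (Set.subset_insert _ _) hr)⟩
    exact hnm ⟨insert v M, hmop, Set.mem_insert _ _⟩
  · exact hmaxD Y hvY hMY hYcm.1 (fun u hu _ => hYcm.2 u hu)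

lemma bwd_sep (hav : Avoidable G v) (hnm : ¬ Moplicial G v) (hvM : v ∉ M)
    (hne : M.Nonempty) (hclq : G.IsClique M) (hmod : IsModule G M)
    (hmodD : ModuleDel G v M)
    (hmaxD : ∀ Y : Set V, v ∉ Y → M ⊆ Y → G.IsClique Y → ModuleDel G v Y → Y = M)
    (hsepD : setNbhd G M \ {v} = ∅ ∨ MinsepDel G v (setNbhd G M \ {v}))
    (hmax : ∀ Y, M ⊆ Y → IsCliqueModule G Y → Y = M) :
    setNbhd G M = ∅ ∨ IsMinimalSeparator G (setNbhd G M) := by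
  obtain ⟨m, hm⟩ := hne
  have hSadj : ∀ s ∈ setNbhd G M, ∀ x ∈ M, G.Adj s x := fun s hs => setNbhd_adj_all hmod hs
  have hmS : m ∉ setNbhd G M := fun h => h.1 hm
  rcases hmod v hvM with hvall | hvnone
  · -- v is adjacent to all of M
    right
    have hvS : v ∈ setNbhd G M := ⟨hvM, m, hm, hvall m hm⟩
    have hins : insert v (setNbhd G M \ {v}) = setNbhd G M := by
      rw [Set.insert_diff_singleton, Set.insert_eq_self.mpr hvS]
    have hAncm : ¬ IsCliqueModule G (insert v M) := by
      intro hcm'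
      have h := hmax _ (Set.subset_insert _ _) hcm'
      exact hvM (h ▸ Set.mem_insert v M)
    have hAclq : G.IsClique (insert v M) := by
      intro x hx y hy hxy
      rcases Set.mem_insert_iff.mp hx with rfl | hxM
      · rcases Set.mem_insert_iff.mp hy with rfl | hyM
        · exact absurd rfl hxy
        · exact hvall y hyM
      · rcases Set.mem_insert_iff.mp hy with rfl | hyM
        · exact (hvall x hxM).symm
        · exact hclq hxM hyM hxy
    have hwitness : (∃ z, z ∉ M ∧ z ≠ v ∧ (∀ x ∈ M, G.Adj z x) ∧ ¬ G.Adj v z) ∨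
        (∃ z, z ∉ M ∧ z ≠ v ∧ (∀ x ∈ M, ¬ G.Adj z x) ∧ G.Adj v z) := by
      have hAnmod : ¬ IsModule G (insert v M) := fun h => hAncm ⟨hAclq, h⟩
      rw [IsModule] at hAnmod
      push_neg at hAnmod
      obtain ⟨z, hzA, ⟨x1, hx1, hzx1⟩, x2, hx2, hzx2⟩ := hAnmod
      have hzv : z ≠ v := fun h => hzA (h ▸ Set.mem_insert _ _)
      have hzM : z ∉ M := fun h => hzA (Set.mem_insert_of_mem _ h)
      rcases hmod z hzM with hz1 | hz0
      · left
        refine ⟨z, hzM, hzv, hz1, ?_⟩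
        intro hvz
        rcases Set.mem_insert_iff.mp hx1 with rfl | h
        · exact hzx1 hvz.symm
        · exact hzx1 (hz1 x1 h)
      · right
        refine ⟨z, hzM, hzv, hz0, ?_⟩
        rcases Set.mem_insert_iff.mp hx2 with rfl | h
        · exact hzx2.symm
        · exact absurd hzx2 (hz0 x2 h)
    rcases hsepD with h0 | hminD
    · -- the deleted neighbourhood is empty, so S = {v}
      have hS1 : setNbhd G M = {v} := by
        ext u
        simp only [Set.mem_singleton_iff]
        constructor
        · intro hu
          by_contra huv
          exact (Set.eq_empty_iff_forall_notMem.mp h0) u ⟨hu, huv⟩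
        · rintro rfl; exact hvS
      obtain ⟨z, hzM, hzv, hznone, hzadj⟩ :
          ∃ z, z ∉ M ∧ z ≠ v ∧ (∀ x ∈ M, ¬ G.Adj z x) ∧ G.Adj v z := by
        rcases hwitness with ⟨z, hzM, hzv, hzall, hznv⟩ | h2
        · exact absurd (show z ∈ setNbhd G M from ⟨hzM, m, hm, hzall m hm⟩)
            (by rw [hS1]; simpa using hzv)
        · exact h2
      have hzS : z ∉ setNbhd G M := by rw [hS1]; simpa using hzv
      refine ⟨m, z, (by rintro rfl; exact hzM hm), ⟨⟨?_, hmS, hzS, ?_⟩, ?_⟩⟩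
      · exact fun h => hznone m hm h.symm
      · intro hr
        exact hzM (reach_stays_in_module hm hr)
      · intro T hT hsepT
        have hT0 : T = ∅ := by
          rw [hS1] at hT
          exact Set.ssubset_singleton_iff.mp hT
        subst hT0
        exact hsepT.2.2.2 ⟨Walk.cons (hvall m hm).symm (Walk.cons hzadj Walk.nil),
          by simp⟩
    · -- the deleted neighbourhood is a minimal separator of G - v
      obtain ⟨p, q, hpv, hqv, hpq, hsepPQ, hminPQ⟩ := hminD
      have hfullP := minsepDel_full hpv hsepPQ hminPQ
      have hfullQ := minsepDel_full hqv (sepDel_symm hsepPQ)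
        (fun T h1 h2 hs => hminPQ T h1 h2 (sepDel_symm hs))
      obtain ⟨e₀, heM, heT, hev, hefull⟩ : ∃ e₀, e₀ ∉ M ∧ e₀ ∉ setNbhd G M \ {v} ∧
          e₀ ≠ v ∧ ∀ s ∈ setNbhd G M \ {v},
            ∃ x, ReachOutside G (insert v (setNbhd G M \ {v})) e₀ x ∧ G.Adj x s := by
        by_cases hpM : p ∈ M
        · have hqM : q ∉ M := fun h => hsepPQ.1 (hclq hpM h hpq)
          exact ⟨q, hqM, hsepPQ.2.2.1, hqv, hfullQ⟩
        · exact ⟨p, hpM, hsepPQ.2.1, hpv, hfullP⟩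
      have hei : e₀ ∉ insert v (setNbhd G M \ {v}) := by
        simp only [Set.mem_insert_iff]
        push_neg
        exact ⟨hev, heT⟩
      by_cases hgood : ∃ d, d ∉ M ∧ d ∉ setNbhd G M \ {v} ∧ d ≠ v ∧
          (∀ s ∈ setNbhd G M \ {v},
            ∃ x, ReachOutside G (insert v (setNbhd G M \ {v})) d x ∧ G.Adj x s) ∧
          (∃ x, ReachOutside G (insert v (setNbhd G M \ {v})) d x ∧ G.Adj v x)
      · -- some component away from M is full and sees v
        obtain ⟨d, hdM, hdT, hdv, hdfull, x₀, hx₀r, hx₀a⟩ := hgood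
        have hdS : d ∉ setNbhd G M := fun h => hdT ⟨h, by simpa using hdv⟩
        refine ⟨m, d, (by rintro rfl; exact hdM hm), ⟨⟨?_, hmS, hdS, ?_⟩, ?_⟩⟩
        · exact fun h => hdS ⟨hdM, m, hm, h.symm⟩
        · intro hr
          exact hdM (reach_stays_in_module hm hr)
        · intro T hT hsepT
          obtain ⟨s, hsS, hsT⟩ := Set.exists_of_ssubset hT
          apply hsepT.2.2.2
          have hTsub' : T ⊆ insert v (setNbhd G M \ {v}) := by
            rw [hins]; exact hT.1
          have hmT : m ∉ T := fun h => hmS (hT.1 h)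
          by_cases hvT : v ∈ T
          · have hsv : s ≠ v := by rintro rfl; exact hsT hvT
            have hsT₀ : s ∈ setNbhd G M \ {v} := ⟨hsS, by simpa using hsv⟩
            obtain ⟨x, hxr, hxs⟩ := hdfull s hsT₀
            have hxT : x ∉ T := fun h => (reach_right hxr) (hTsub' h)
            exact reach_trans (reach_adj (hSadj s hsS m hm).symm hmT hsT)
              (reach_trans (reach_adj hxs.symm hsT hxT)
                (reach_mono hTsub' (reach_symm hxr)))
          · have hx₀T : x₀ ∉ T := fun h => (reach_right hx₀r) (hTsub' h)
            exact reach_trans (reach_adj (hvall m hm).symm hmT hvT)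
              (reach_trans (reach_adj hx₀a hvT hx₀T)
                (reach_mono hTsub' (reach_symm hx₀r)))
      · exfalso
        push_neg at hgood
        have hEnone : ∀ x, ReachOutside G (insert v (setNbhd G M \ {v})) e₀ x →
            ¬ G.Adj v x := hgood e₀ heM heT hev hefull
        by_cases hsN : ∃ s₁ ∈ setNbhd G M \ {v}, ¬ G.Adj v s₁
        · -- moplex construction around v, based at s₁
          obtain ⟨s₁, hs₁T, hs₁v⟩ := hsN
          have hs₁S : s₁ ∈ setNbhd G M := hs₁T.1
          have hXcm := maxCM_cm G v
          have hXmax := maxCM_max G v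
          have hvX := mem_maxCM G v
          have hXM : ∀ x ∈ maxCM G v, x ∉ M := by
            intro x hx hxM
            have hMX : M ⊆ maxCM G v := by
              intro m' hm'
              have hcm : IsCliqueModule G (maxCM G v ∪ M) := by
                constructor
                · intro p' hp' q' hq' hne'
                  rcases hp' with hp1 | hp2
                  · rcases hq' with hq1 | hq2
                    · exact hXcm.1 hp1 hq1 hne'
                    · by_cases hq'X : q' ∈ maxCM G v
                      · exact hXcm.1 hp1 hq'X hne'
                      · have hq'x : G.Adj q' x := hclq hq2 hxM
                          (by rintro rfl; exact hq'X hx)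
                        exact (module_adj_all hXcm.2 hq'X hx hq'x p' hp1).symm
                  · rcases hq' with hq1 | hq2
                    · by_cases hp'X : p' ∈ maxCM G v
                      · exact hXcm.1 hp'X hq1 hne'
                      · have hp'x : G.Adj p' x := hclq hp2 hxM
                          (by rintro rfl; exact hp'X hx)
                        exact module_adj_all hXcm.2 hp'X hx hp'x q' hq1
                    · exact hclq hp2 hq2 hne'
                · intro z hz
                  have hzX : z ∉ maxCM G v := fun h => hz (Or.inl h)
                  have hzM : z ∉ M := fun h => hz (Or.inr h)
                  rcases hXcm.2 z hzX with h1 | h0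
                  · left
                    intro p' hp'
                    rcases hp' with h | h
                    · exact h1 p' h
                    · exact module_adj_all hmod hzM hxM (h1 x hx) p' h
                  · right
                    intro p' hp' hadj
                    rcases hp' with h | h
                    · exact h0 p' h hadj
                    · rcases hmod z hzM with hz1 | hz0
                      · exact h0 x hx (hz1 x hxM)
                      · exact hz0 p' h hadj
              have heq := hXmax _ Set.subset_union_left hcm
              exact heq ▸ (Set.mem_union_right _ hm')
            have hXv : (maxCM G v) \ {v} = M := hmaxD _ (by simp)
              (fun y hy => ⟨hMX hy, by rintro rfl; exact hvM hy⟩)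
              (hXcm.1.subset Set.diff_subset)
              (fun u hu huv => by
                rcases hXcm.2 u (fun h => hu ⟨h, huv⟩) with h1 | h0
                · exact Or.inl fun y hy => h1 y hy.1
                · exact Or.inr fun y hy => h0 y hy.1)
            have hXeq : maxCM G v = insert v M := by
              rw [← hXv, Set.insert_diff_singleton, Set.insert_eq_self.mpr hvX]
            exact hAncm (hXeq ▸ hXcm)
          have hs₁ne : s₁ ≠ v := by
            have := hs₁T.2; simpa using this
          have hs₁X : s₁ ∉ maxCM G v := fun h =>
            hs₁v (hXcm.1 hvX h (Ne.symm hs₁ne))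
          have hWadj : ∀ w ∈ setNbhd G (maxCM G v), G.Adj v w := fun w hw =>
            (setNbhd_adj_all hXcm.2 hw v hvX).symm
          have hs₁W : s₁ ∉ setNbhd G (maxCM G v) := fun h => hs₁v (hWadj s₁ h)
          have hEr : ∀ x, ReachOutside G (insert v (setNbhd G M \ {v})) e₀ x →
              ReachOutside G (setNbhd G (maxCM G v)) e₀ x := by
            rintro x ⟨wlk, hs⟩
            exact ⟨wlk, fun u hu hW => hEnone u (walk_reach wlk hs u hu) (hWadj u hW)⟩
          obtain ⟨x₁, hx₁r, hx₁s⟩ := hefull s₁ hs₁T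
          have hs₁C : ReachOutside G (setNbhd G (maxCM G v)) s₁ e₀ :=
            reach_trans (reach_adj hx₁s.symm hs₁W
                (fun h => hEnone x₁ hx₁r (hWadj x₁ h)))
              (reach_symm (hEr x₁ hx₁r))
          have hfull : ∀ w ∈ setNbhd G (maxCM G v),
              ∃ y, ReachOutside G (setNbhd G (maxCM G v)) s₁ y ∧ G.Adj w y := by
            intro w hw
            have hvw := hWadj w hw
            have hwv : w ≠ v := fun h => G.irrefl (h ▸ hvw)
            by_cases hwM : w ∈ M
            · exact ⟨s₁, reach_refl hs₁W, (hSadj s₁ hs₁S w hwM).symm⟩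
            · by_cases hwS : w ∈ setNbhd G M
              · have hwT : w ∈ setNbhd G M \ {v} := ⟨hwS, by simpa using hwv⟩
                obtain ⟨xw, hxwr, hxws⟩ := hefull w hwT
                exact ⟨xw, reach_trans hs₁C (hEr xw hxwr), hxws.symm⟩
              · have hwnone : ∀ x ∈ M, ¬ G.Adj w x := by
                  rcases hmodD w hwM hwv with h1 | h0
                  · exact absurd (show w ∈ setNbhd G M from ⟨hwM, m, hm, h1 m hm⟩) hwS
                  · exact h0
                obtain ⟨y, z, mid, hmy, hzw, hmid⟩ := arc_of_avoidable hav
                  ⟨(by rintro rfl; exact hwM hm), hvall m hm, hvw,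
                    fun h => hwnone m hm h.symm⟩
                have hyprops := hmid y mid.start_mem_support
                have hyM : y ∉ M := fun h => hyprops.1 (hvall y h)
                have hyS : y ∈ setNbhd G M := ⟨hyM, m, hm, hmy.symm⟩
                have hyT : y ∈ setNbhd G M \ {v} := ⟨hyS, by simpa using hyprops.2.1⟩
                obtain ⟨xy, hxyr, hxys⟩ := hefull y hyT
                have hyW : y ∉ setNbhd G (maxCM G v) := fun h => hyprops.1 (hWadj y h)
                have hyC : ReachOutside G (setNbhd G (maxCM G v)) s₁ y :=
                  reach_trans (reach_trans hs₁C (hEr xy hxyr))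
                    (reach_adj hxys (fun h => hEnone xy hxyr (hWadj xy h)) hyW)
                have hmidW : ∀ u ∈ mid.support, u ∉ setNbhd G (maxCM G v) :=
                  fun u hu hin => (hmid u hu).1 (hWadj u hin)
                exact ⟨z, reach_trans hyC (walk_reach mid hmidW z mid.end_mem_support),
                  hzw.symm⟩
          exact hnm ⟨maxCM G v, moplex_of_full hXcm hXmax ⟨v, hvX⟩ hs₁X hs₁W hfull, hvX⟩
        · -- Ω : every vertex of the deleted separator sees v
          push_neg at hsN
          obtain ⟨z₀, hz₀M, hz₀v, hz₀none, hz₀adj⟩ :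
              ∃ z, z ∉ M ∧ z ≠ v ∧ (∀ x ∈ M, ¬ G.Adj z x) ∧ G.Adj v z := by
            rcases hwitness with ⟨z, hzM, hzv, hzall, hznv⟩ | h2
            · exact absurd (hsN z ⟨⟨hzM, m, hm, hzall m hm⟩, by simpa using hzv⟩) hznv
            · obtain ⟨z, h1, h2', h3, h4⟩ := h2
              exact ⟨z, h1, h2', h3, h4⟩
          have hz₀S : z₀ ∉ setNbhd G M := by
            rintro ⟨_, x, hx, hadj⟩
            exact hz₀none x hx hadj
          have hz₀T : z₀ ∉ setNbhd G M \ {v} := fun h => hz₀S h.1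
          have hz₀i : z₀ ∉ insert v (setNbhd G M \ {v}) := by
            simp only [Set.mem_insert_iff]
            push_neg
            exact ⟨hz₀v, hz₀T⟩
          obtain ⟨s₁, hs₁T, hbad⟩ : ∃ s ∈ setNbhd G M \ {v},
              ∀ x, ReachOutside G (insert v (setNbhd G M \ {v})) z₀ x → ¬ G.Adj x s := by
            by_contra hc
            push_neg at hc
            exact (hgood z₀ hz₀M hz₀T hz₀v hc) z₀ (reach_refl hz₀i) hz₀adj
          have hs₁adj : G.Adj v s₁ := hsN s₁ hs₁T
          have hnadjz : ¬ G.Adj z₀ s₁ := fun h => hbad z₀ (reach_refl hz₀i) h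
          obtain ⟨y, z, mid, hz₀y, hzs₁, hmid⟩ := arc_of_avoidable hav
            ⟨(by rintro rfl; exact hz₀T hs₁T), hz₀adj, hs₁adj, hnadjz⟩
          refine hbad z ⟨Walk.cons hz₀y mid, ?_⟩ hzs₁
          intro u hu
          rcases (by simpa using hu : u = z₀ ∨ u ∈ mid.support) with rfl | hu'
          · exact hz₀i
          · intro hmem
            rcases Set.mem_insert_iff.mp hmem with rfl | h'
            · exact (hmid u hu').2.1 rfl
            · exact (hmid u hu').1 (hsN u h')
  · -- v is adjacent to nothing in M
    have hSv : setNbhd G M \ {v} = setNbhd G M := by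
      ext u
      simp only [Set.mem_diff, Set.mem_singleton_iff]
      refine ⟨fun h => h.1, fun h => ⟨h, ?_⟩⟩
      rintro rfl
      obtain ⟨_, x, hx, hadj⟩ := h
      exact hvnone x hx hadj
    rcases hsepD with h0 | hminD
    · left; rw [← hSv]; exact h0
    · right
      rw [hSv] at hminD
      obtain ⟨p, q, hpv, hqv, hpq, hsepPQ, hminPQ⟩ := hminD
      have hfullP := minsepDel_full hpv hsepPQ hminPQ
      have hfullQ := minsepDel_full hqv (sepDel_symm hsepPQ)
        (fun T h1 h2 hs => hminPQ T h1 h2 (sepDel_symm hs))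
      obtain ⟨e₀, heM, heT, hefull⟩ : ∃ e₀, e₀ ∉ M ∧ e₀ ∉ setNbhd G M ∧
          ∀ s ∈ setNbhd G M,
            ∃ x, ReachOutside G (insert v (setNbhd G M)) e₀ x ∧ G.Adj x s := by
        by_cases hpM : p ∈ M
        · exact ⟨q, fun h => hsepPQ.1 (hclq hpM h hpq), hsepPQ.2.2.1, hfullQ⟩
        · exact ⟨p, hpM, hsepPQ.2.1, hfullP⟩
      refine ⟨m, e₀, (by rintro rfl; exact heM hm), ⟨⟨?_, hmS, heT, ?_⟩, ?_⟩⟩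
      · exact fun h => heT ⟨heM, m, hm, h.symm⟩
      · intro hr
        exact heM (reach_stays_in_module hm hr)
      · intro T hT hsepT
        obtain ⟨s, hsS, hsT⟩ := Set.exists_of_ssubset hT
        apply hsepT.2.2.2
        obtain ⟨x, hxr, hxs⟩ := hefull s hsS
        have hTsub' : T ⊆ insert v (setNbhd G M) := hT.1.trans (Set.subset_insert _ _)
        have hmT : m ∉ T := fun h => hmS (hT.1 h)
        have hxT : x ∉ T := fun h => (reach_right hxr) (hTsub' h)
        exact reach_trans (reach_adj (hSadj s hsS m hm).symm hmT hsT)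
          (reach_trans (reach_adj hxs.symm hsT hxT)
            (reach_mono hTsub' (reach_symm hxr)))

end Main

/-- If `v` is an avoidable non-moplicial vertex and `v ∉ M`, then `M` is a moplex of `G`
iff the corresponding set is a moplex of `G - v`. -/
theorem moplex_iff_moplex_deleteAvoidable {V : Type*} [Fintype V] (G : SimpleGraph V)
    (v : V) (hav : Avoidable G v) (hnm : ¬ Moplicial G v)
    (M : Set V) (hvM : v ∉ M) :
    IsMoplex G M ↔
      IsMoplex (G.comap (Subtype.val : {x : V // x ≠ v} → V))
        {x : {x : V // x ≠ v} | (x : V) ∈ M} := by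
  rw [moplex_del_iff hvM]
  constructor
  · intro h
    exact ⟨h.1, h.2.1.1, fun u hu _ => h.2.1.2 u hu, fwd_max hav hvM h hnm,
      fwd_sep hav hvM h hnm⟩
  · rintro ⟨hne, hclq, hmodD, hmaxD, hsepD⟩
    have huniv := bwd_uniform hav hnm hvM hclq hmodD
    have hmod : IsModule G M := by
      intro u hu
      rcases eq_or_ne u v with rfl | h
      · exact huniv
      · exact hmodD u hu h
    have hmax := bwd_max hnm hvM hne hclq hmaxD hsepD
    exact ⟨hne, ⟨hclq, hmod⟩, hmax,
      bwd_sep hav hnm hvM hne hclq hmod hmodD hmaxD hsepD hmax⟩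
end MoplexPaper
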